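/- Let K be a field containing a primitive n-th root of unity ζ, T a nonempty finite subset of ZMod n, k a positive integer, and suppose f_T = ∏_{γ ∈ T}(X − ζ^{γ̃}) factors as a product of binomials of the same degree: f_T = ∏_{i ∈ I} (X^k − c_i) for some finite family (c_i)_{i ∈ I} of elements of K. Then k divides n and the image of n/k in ZMod n satisfies (n/k) + T = T; that is, T admits a multiple equal-difference representation with common difference n/k. -/
import Mathlib


open Polynomial

/-- If `f_T = ∏_{γ ∈ T}(X - ζ^γ̃)` factors as a product of binomials of the same
degree `k > 0`, i.e. `f_T = ∏_{i ∈ I} (X^k - c_i)`, then `k ∣ n` and the image of `n/k` in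
`ZMod n` stabilizes `T`: `(n/k) + T = T`. -/
theorem binomial_factorization_gives_med {K : Type*} [Field K]
    (n : ℕ) (hn : 0 < n) (ζ : K) (hζ : IsPrimitiveRoot ζ n)
    (T : Finset (ZMod n)) (hT : T.Nonempty) (k : ℕ) (hk : 0 < k)
    {ι : Type*} (I : Finset ι) (c : ι → K)
    (hfac : ∏ γ ∈ T, (X - C (ζ ^ γ.val)) = ∏ i ∈ I, (X ^ k - C (c i))) :
    k ∣ n ∧ ((((n / k : ℕ) : ZMod n)) + ·) '' (T : Set (ZMod n)) = (T : Set (ZMod n)) := by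
  classical
  haveI : NeZero n := ⟨hn.ne'⟩
  have hζ0 : ζ ≠ 0 := by
    intro h
    have h1 := hζ.pow_eq_one
    rw [h, zero_pow hn.ne'] at h1
    exact zero_ne_one h1
  -- comparing powers of ζ
  have hpow : ∀ a b : ℕ, ζ ^ a = ζ ^ b ↔ (a : ZMod n) = (b : ZMod n) := by
    have key : ∀ a b : ℕ, a ≤ b → (ζ ^ a = ζ ^ b ↔ a ≡ b [MOD n]) := by
      intro a b hab
      have h1 : ζ ^ b = ζ ^ (b - a) * ζ ^ a := by
        rw [← pow_add, Nat.sub_add_cancel hab]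
      rw [h1]
      constructor
      · intro h
        have h2 : (1 : K) * ζ ^ a = ζ ^ (b - a) * ζ ^ a := by rw [one_mul]; exact h
        have h3 := mul_right_cancel₀ (pow_ne_zero a hζ0) h2
        exact (Nat.modEq_iff_dvd' hab).mpr ((hζ.pow_eq_one_iff_dvd _).mp h3.symm)
      · intro h
        rw [(hζ.pow_eq_one_iff_dvd _).mpr ((Nat.modEq_iff_dvd' hab).mp h), one_mul]
    intro a b
    rw [ZMod.natCast_eq_natCast_iff]
    rcases le_total a b with h | h
    · exact key a b h
    · exact ⟨fun h' => ((key b a h).mp h'.symm).symm, fun h' => ((key b a h).mpr h'.symm).symm⟩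
  set f : ZMod n → K := fun γ => ζ ^ γ.val with hf
  have hfinj : Function.Injective f := by
    intro a b hab
    have h1 := (hpow a.val b.val).mp hab
    rwa [ZMod.natCast_val, ZMod.natCast_val, ZMod.cast_id, ZMod.cast_id] at h1
  -- root correspondence
  have hroot : ∀ z : K, (∃ γ ∈ T, z = f γ) ↔ ∃ i ∈ I, z ^ k = c i := by
    intro z
    have h1 : eval z (∏ γ ∈ T, (X - C (f γ))) = eval z (∏ i ∈ I, (X ^ k - C (c i))) := by
      rw [hfac]
    simp only [eval_prod, eval_sub, eval_pow, eval_X, eval_C] at h1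
    constructor
    · rintro ⟨γ, hγ, hz⟩
      have h2 : ∏ i ∈ I, (z ^ k - c i) = 0 := by
        rw [← h1]
        exact Finset.prod_eq_zero hγ (by rw [hz, sub_self])
      obtain ⟨i, hi, h3⟩ := Finset.prod_eq_zero_iff.mp h2
      exact ⟨i, hi, sub_eq_zero.mp h3⟩
    · rintro ⟨i, hi, hz⟩
      have h2 : ∏ γ ∈ T, (z - f γ) = 0 := by
        rw [h1]
        exact Finset.prod_eq_zero hi (by rw [hz, sub_self])
      obtain ⟨γ, hγ, h3⟩ := Finset.prod_eq_zero_iff.mp h2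
      exact ⟨γ, hγ, sub_eq_zero.mp h3⟩
  -- degree count
  have hdegL : (∏ γ ∈ T, (X - C (f γ))).natDegree = T.card := by
    rw [natDegree_prod _ _ (fun γ _ => X_sub_C_ne_zero (f γ))]
    simp [natDegree_X_sub_C]
  have hdegR : (∏ i ∈ I, (X ^ k - C (c i))).natDegree = k * I.card := by
    rw [natDegree_prod _ _ (fun i _ => X_pow_sub_C_ne_zero hk (c i))]
    simp [natDegree_X_pow_sub_C, mul_comm]
  have hcard : T.card = k * I.card := by rw [← hdegL, hfac, hdegR]
  -- roots multisets
  have hrootsL : (∏ γ ∈ T, (X - C (f γ))).roots = T.val.map f := by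
    have h1 : ∏ γ ∈ T, (X - C (f γ)) = (Multiset.map (fun a => X - C a) (T.val.map f)).prod := by
      rw [Multiset.map_map]
      rfl
    rw [h1, roots_multiset_prod_X_sub_C]
  have hRHSne : ∀ i ∈ I, (X ^ k - C (c i)) ≠ 0 := fun i _ => X_pow_sub_C_ne_zero hk (c i)
  have hrootsR : (∏ i ∈ I, (X ^ k - C (c i))).roots
      = I.val.bind fun i => nthRoots k (c i) :=
    roots_prod _ I (Finset.prod_ne_zero_iff.mpr hRHSne)
  have hrootseq : T.val.map f = I.val.bind fun i => nthRoots k (c i) := by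
    rw [← hrootsL, hfac, hrootsR]
  -- the sum of cardinalities
  have hsum : ∑ i ∈ I, Multiset.card (nthRoots k (c i)) = k * I.card := by
    have h1 := congrArg Multiset.card hrootseq
    rw [Multiset.card_map, Multiset.card_bind] at h1
    simp only [Function.comp] at h1
    rw [Finset.sum_eq_multiset_sum, ← h1]
    exact hcard
  -- I is nonempty
  have hI : I.Nonempty := by
    rcases Finset.eq_empty_or_nonempty I with h | h
    · exfalso
      rw [h, Finset.card_empty, mul_zero] at hcard
      exact hT.card_pos.ne' (by omega)
    · exact h
  obtain ⟨i₀, hi₀⟩ := hI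
  -- each binomial has exactly k roots
  have hcard₀ : Multiset.card (nthRoots k (c i₀)) = k := by
    by_contra hne
    have hlt : Multiset.card (nthRoots k (c i₀)) < k :=
      lt_of_le_of_ne (card_nthRoots k (c i₀)) hne
    have h1 : ∑ i ∈ I, Multiset.card (nthRoots k (c i)) < ∑ i ∈ I, k :=
      Finset.sum_lt_sum (fun i _ => card_nthRoots k (c i)) ⟨i₀, hi₀, hlt⟩
    rw [Finset.sum_const, smul_eq_mul, mul_comm, hsum] at h1
    exact lt_irrefl _ h1
  -- roots of the binomial are distinct
  have hnodupL : (T.val.map f).Nodup := Multiset.Nodup.map hfinj T.nodup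
  have hle : nthRoots k (c i₀) ≤ T.val.map f := by
    rw [hrootseq]
    exact Multiset.le_bind I.val hi₀
  have hnodup₀ : (nthRoots k (c i₀)).Nodup := Multiset.nodup_of_le hle hnodupL
  set S₀ : Finset K := (nthRoots k (c i₀)).toFinset with hS₀
  have hS₀card : S₀.card = k := by
    rw [hS₀, Multiset.toFinset_card_of_nodup hnodup₀, hcard₀]
  have hS₀mem : ∀ z ∈ S₀, z ^ k = c i₀ ∧ z ^ n = 1 ∧ z ≠ 0 := by
    intro z hz
    rw [hS₀, Multiset.mem_toFinset] at hz
    have h1 : z ^ k = c i₀ := (mem_nthRoots hk).mp hz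
    have h2 : z ∈ T.val.map f := Multiset.mem_of_le hle hz
    obtain ⟨γ, _, rfl⟩ := Multiset.mem_map.mp h2
    refine ⟨h1, ?_, pow_ne_zero _ hζ0⟩
    rw [hf]
    rw [← pow_mul, mul_comm, pow_mul, hζ.pow_eq_one, one_pow]
  have hS₀ne : S₀.Nonempty := by
    rw [← Finset.card_pos, hS₀card]; exact hk
  obtain ⟨z₀, hz₀⟩ := hS₀ne
  obtain ⟨hz₀k, hz₀n, hz₀0⟩ := hS₀mem z₀ hz₀
  -- the ratios are gcd(k,n)-th roots of unity
  set g : ℕ := Nat.gcd k n with hg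
  have hg0 : 0 < g := Nat.gcd_pos_of_pos_left n hk
  have hdvd : k ∣ n := by
    have hinj : Function.Injective (fun z : K => z / z₀) := fun a b hab => by
      field_simp at hab
      exact hab
    set F : Finset K := S₀.image (fun z => z / z₀) with hF
    have hFcard : F.card = k := by
      rw [hF, Finset.card_image_of_injective _ hinj, hS₀card]
    have hFsub : F ⊆ (nthRoots g (1 : K)).toFinset := by
      intro x hx
      obtain ⟨z, hz, rfl⟩ := Finset.mem_image.mp hx
      obtain ⟨hzk, hzn, hz0⟩ := hS₀mem z hz
      have hxk : (z / z₀) ^ k = 1 := by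
        rw [div_pow, hzk, hz₀k, div_self]
        rw [← hz₀k]
        exact pow_ne_zero _ hz₀0
      have hxn : (z / z₀) ^ n = 1 := by
        rw [div_pow, hzn, hz₀n, div_one]
      have hdvd1 : orderOf (z / z₀) ∣ g :=
        Nat.dvd_gcd (orderOf_dvd_of_pow_eq_one hxk) (orderOf_dvd_of_pow_eq_one hxn)
      rw [Multiset.mem_toFinset, mem_nthRoots hg0]
      exact orderOf_dvd_iff_pow_eq_one.mp hdvd1
    have h1 : k ≤ g := by
      calc k = F.card := hFcard.symm
        _ ≤ (nthRoots g (1 : K)).toFinset.card := Finset.card_le_card hFsub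
        _ ≤ Multiset.card (nthRoots g (1 : K)) := Multiset.toFinset_card_le _
        _ ≤ g := card_nthRoots g 1
    have h2 : g = k := le_antisymm (Nat.gcd_le_left n hk) h1
    rw [hg] at h2
    exact h2 ▸ Nat.gcd_dvd_right k n
  -- translation stability
  have hstab : ∀ γ ∈ T, ((n / k : ℕ) : ZMod n) + γ ∈ T := by
    intro γ hγ
    obtain ⟨i, hi, hci⟩ := (hroot (f γ)).mp ⟨γ, hγ, rfl⟩
    have hw : (ζ ^ (γ.val + n / k)) ^ k = c i := by
      rw [← pow_mul, add_mul, pow_add, Nat.div_mul_cancel hdvd, hζ.pow_eq_one, mul_one,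
        pow_mul]
      exact hci
    obtain ⟨γ', hγ', hz⟩ := (hroot (ζ ^ (γ.val + n / k))).mpr ⟨i, hi, hw⟩
    have h1 := (hpow (γ.val + n / k) γ'.val).mp hz
    push_cast at h1
    rw [ZMod.natCast_val, ZMod.natCast_val, ZMod.cast_id, ZMod.cast_id] at h1
    rw [add_comm] at h1
    rwa [h1]
  refine ⟨hdvd, ?_⟩
  have himg : T.image (fun x => ((n / k : ℕ) : ZMod n) + x) = T :=
    Finset.eq_of_subset_of_card_le
      (by
        intro x hx
        obtain ⟨γ, hγ, rfl⟩ := Finset.mem_image.mp hx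
        exact hstab γ hγ)
      (le_of_eq (Finset.card_image_of_injective _ (add_right_injective _)).symm)
  rw [← Finset.coe_image, himg]
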